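/- Let W ~ Exp(δ) and V ~ Exp(β) be independent, let t > 0, and set D := min{t, W}. Then E[min{0, V − min{X, D}}] for any fixed X ≥ 0 equals ∫_{ℝ₊²} βδ e^{−βx − δy}·min{0, x − min{X, y}} d(x,y) = −β/(δ(β+δ)) + O(e^{−δX}) as X → ∞. -/

import Mathlib

open MeasureTheory Real

private lemma hasDerivAt_exp_neg (c x : ℝ) :
    HasDerivAt (fun y : ℝ => Real.exp (-c * y)) (-c * Real.exp (-c * x)) x := by
  have h1 : HasDerivAt (fun y : ℝ => -c * y) (-c) x := by
    simpa using (hasDerivAt_id x).const_mul (-c)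
  simpa [mul_comm] using h1.exp

private lemma exp_int_Ioi (c a : ℝ) (hc : 0 < c) :
    ∫ y in Set.Ioi a, c * Real.exp (-c * y) = Real.exp (-c * a) := by
  have h := integral_Ioi_of_hasDerivAt_of_tendsto'
    (f := fun y : ℝ => -Real.exp (-c * y))
    (f' := fun y : ℝ => c * Real.exp (-c * y)) (a := a) (m := 0)
    (fun x _ => by simpa [Pi.neg_def] using (hasDerivAt_exp_neg c x).neg)
    ((exp_neg_integrableOn_Ioi a hc).const_mul c)
    ?_
  · simpa using h
  · have : Filter.Tendsto (fun y : ℝ => Real.exp (-c * y)) Filter.atTop (nhds 0) := by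
      have h2 : Filter.Tendsto (fun y : ℝ => c * y) Filter.atTop Filter.atTop :=
        Filter.Tendsto.const_mul_atTop hc Filter.tendsto_id
      have h3 := Real.tendsto_exp_neg_atTop_nhds_zero.comp h2
      have h4 : (fun y : ℝ => Real.exp (-c * y)) = (fun x => Real.exp (-x)) ∘ fun y => c * y := by
        funext y; simp [Function.comp, neg_mul]
      rw [h4]; exact h3
    simpa using this.neg

private lemma inner_int (β m : ℝ) (hβ : 0 < β) (hm : 0 ≤ m) :
    ∫ x in Set.Ioi (0:ℝ), β * Real.exp (-β * x) * min 0 (x - m)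
      = (1 - Real.exp (-β * m)) / β - m := by
  have hdisj : Disjoint (Set.Ioc 0 m) (Set.Ioi m) := Set.Ioc_disjoint_Ioi le_rfl
  have hunion : Set.Ioc (0:ℝ) m ∪ Set.Ioi m = Set.Ioi 0 := Set.Ioc_union_Ioi_eq_Ioi hm
  have hcont : Continuous (fun x : ℝ => β * Real.exp (-β * x) * min 0 (x - m)) := by
    fun_prop
  have hint1 : IntegrableOn (fun x : ℝ => β * Real.exp (-β * x) * min 0 (x - m))
      (Set.Ioc 0 m) := hcont.integrableOn_Ioc
  have hzero : Set.EqOn (fun _ : ℝ => (0:ℝ))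
      (fun x : ℝ => β * Real.exp (-β * x) * min 0 (x - m)) (Set.Ioi m) := by
    intro x hx
    have : min 0 (x - m) = 0 := min_eq_left (by simp at hx; linarith)
    simp [this]
  have hint2 : IntegrableOn (fun x : ℝ => β * Real.exp (-β * x) * min 0 (x - m))
      (Set.Ioi m) :=
    IntegrableOn.congr_fun (integrableOn_zero :
      IntegrableOn (fun _ : ℝ => (0:ℝ)) (Set.Ioi m) volume) hzero measurableSet_Ioi
  rw [← hunion, setIntegral_union hdisj measurableSet_Ioi hint1 hint2]
  have h2 : ∫ x in Set.Ioi m, β * Real.exp (-β * x) * min 0 (x - m) = 0 := by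
    rw [setIntegral_congr_fun measurableSet_Ioi hzero.symm]
    simp
  rw [h2, add_zero]
  have h1 : ∫ x in Set.Ioc (0:ℝ) m, β * Real.exp (-β * x) * min 0 (x - m)
      = ∫ x in Set.Ioc (0:ℝ) m, β * Real.exp (-β * x) * (x - m) := by
    refine setIntegral_congr_fun measurableSet_Ioc (fun x hx => ?_)
    have : min 0 (x - m) = x - m := min_eq_right (by linarith [hx.2])
    rw [this]
  rw [h1, ← intervalIntegral.integral_of_le hm]
  have key : ∫ x in (0:ℝ)..m, β * Real.exp (-β * x) * (x - m)
      = (-Real.exp (-β * m) * (m - m) - Real.exp (-β * m) / β)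
        - (-Real.exp (-β * 0) * (0 - m) - Real.exp (-β * 0) / β) := by
    refine intervalIntegral.integral_eq_sub_of_hasDerivAt
      (f := fun y : ℝ => -Real.exp (-β * y) * (y - m) - Real.exp (-β * y) / β)
      (fun x _ => ?_) ?_
    · have hd1 : HasDerivAt (fun y : ℝ => -Real.exp (-β * y) * (y - m))
          (-( -β * Real.exp (-β * x)) * (x - m) + -Real.exp (-β * x) * 1) x :=
        ((hasDerivAt_exp_neg β x).neg.mul ((hasDerivAt_id x).sub_const m))
      have hd2 : HasDerivAt (fun y : ℝ => Real.exp (-β * y) / β)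
          ((-β * Real.exp (-β * x)) / β) x := (hasDerivAt_exp_neg β x).div_const β
      have := hd1.sub hd2
      refine this.congr_deriv ?_
      field_simp
      ring
    · exact (by fun_prop : Continuous fun x : ℝ => β * Real.exp (-β * x) * (x - m)).intervalIntegrable 0 m
  rw [key]
  simp only [Real.exp_zero, mul_zero, neg_mul]
  field_simp
  ring

private lemma outer_int (β δ X : ℝ) (hβ : 0 < β) (hδ : 0 < δ) (hX : 0 ≤ X) :
    ∫ y in Set.Ioi (0:ℝ),
        δ * Real.exp (-δ * y) * ((1 - Real.exp (-β * min X y)) / β - min X y)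
      = -(β / (δ * (β + δ))) + Real.exp (-δ * X) / δ
        - Real.exp (-(β + δ) * X) / (β + δ) := by
  set F : ℝ → ℝ := fun y => δ * Real.exp (-δ * y) * ((1 - Real.exp (-β * min X y)) / β - min X y)
    with hF
  have hdisj : Disjoint (Set.Ioc 0 X) (Set.Ioi X) := Set.Ioc_disjoint_Ioi le_rfl
  have hunion : Set.Ioc (0:ℝ) X ∪ Set.Ioi X = Set.Ioi 0 := Set.Ioc_union_Ioi_eq_Ioi hX
  have hcont : Continuous F := by fun_prop
  have hint1 : IntegrableOn F (Set.Ioc 0 X) := hcont.integrableOn_Ioc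
  set c : ℝ := (1 - Real.exp (-β * X)) / β - X with hc
  have heq2 : Set.EqOn (fun y : ℝ => δ * Real.exp (-δ * y) * c) F (Set.Ioi X) := by
    intro y hy
    have : min X y = X := min_eq_left (le_of_lt hy)
    simp [hF, this, hc]
  have hint2 : IntegrableOn F (Set.Ioi X) := by
    refine IntegrableOn.congr_fun ?_ heq2 measurableSet_Ioi
    exact ((exp_neg_integrableOn_Ioi X hδ).const_mul δ).mul_const c
  rw [← hunion, setIntegral_union hdisj measurableSet_Ioi hint1 hint2]
  have h2 : ∫ y in Set.Ioi X, F y = c * Real.exp (-δ * X) := by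
    rw [setIntegral_congr_fun measurableSet_Ioi heq2.symm]
    have : ∫ y in Set.Ioi X, δ * Real.exp (-δ * y) * c
        = (∫ y in Set.Ioi X, δ * Real.exp (-δ * y)) * c := by
      rw [integral_mul_const]
    rw [this, exp_int_Ioi δ X hδ, mul_comm]
  have h1 : ∫ y in Set.Ioc (0:ℝ) X, F y
      = ∫ y in Set.Ioc (0:ℝ) X, δ * Real.exp (-δ * y) * ((1 - Real.exp (-β * y)) / β - y) := by
    refine setIntegral_congr_fun measurableSet_Ioc (fun y hy => ?_)
    have : min X y = y := min_eq_right hy.2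
    simp [hF, this]
  set G : ℝ → ℝ := fun y => -Real.exp (-δ * y) / β
      + δ * Real.exp (-(β + δ) * y) / (β * (β + δ))
      + y * Real.exp (-δ * y) + Real.exp (-δ * y) / δ with hG
  have hbd : 0 < β + δ := by linarith
  have key : ∫ y in (0:ℝ)..X, δ * Real.exp (-δ * y) * ((1 - Real.exp (-β * y)) / β - y)
      = G X - G 0 := by
    refine intervalIntegral.integral_eq_sub_of_hasDerivAt (f := G) (fun y _ => ?_) ?_
    · have hd1 : HasDerivAt (fun z : ℝ => -Real.exp (-δ * z) / β)
          (-(-δ * Real.exp (-δ * y)) / β) y := (hasDerivAt_exp_neg δ y).neg.div_const β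
      have hd2 : HasDerivAt (fun z : ℝ => δ * Real.exp (-(β + δ) * z) / (β * (β + δ)))
          (δ * (-(β + δ) * Real.exp (-(β + δ) * y)) / (β * (β + δ))) y :=
        ((hasDerivAt_exp_neg (β + δ) y).const_mul δ).div_const (β * (β + δ))
      have hd3 : HasDerivAt (fun z : ℝ => z * Real.exp (-δ * z))
          (1 * Real.exp (-δ * y) + y * (-δ * Real.exp (-δ * y))) y :=
        (hasDerivAt_id y).mul (hasDerivAt_exp_neg δ y)
      have hd4 : HasDerivAt (fun z : ℝ => Real.exp (-δ * z) / δ)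
          ((-δ * Real.exp (-δ * y)) / δ) y := (hasDerivAt_exp_neg δ y).div_const δ
      have := ((hd1.add hd2).add hd3).add hd4
      refine this.congr_deriv ?_
      rw [show -(β + δ) * y = -β * y + -δ * y by ring, Real.exp_add]
      field_simp
      ring
    · exact (by fun_prop :
        Continuous fun y : ℝ => δ * Real.exp (-δ * y) * ((1 - Real.exp (-β * y)) / β - y)).intervalIntegrable 0 X
  rw [h1, h2, ← intervalIntegral.integral_of_le hX, key]
  simp only [hG, hc]
  rw [show -(β + δ) * X = -β * X + -δ * X by ring, Real.exp_add]
  simp only [mul_zero, Real.exp_zero, zero_mul]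
  field_simp
  ring

/-- the expected downward jump
∫_{ℝ₊²} βδ e^{−βx−δy} min{0, x − min{X,y}} d(x,y) equals −β/(δ(β+δ)) + O(e^{−δX}) as X → ∞. -/
theorem stmt10 (β δ : ℝ) (hβ : 0 < β) (hδ : 0 < δ) :
    ∃ C > 0, ∀ X : ℝ, 0 ≤ X →
      |(∫ p in (Set.Ioi (0:ℝ)) ×ˢ (Set.Ioi (0:ℝ)),
          β * δ * Real.exp (-β * p.1 - δ * p.2) * min 0 (p.1 - min X p.2)) -
        (-(β / (δ * (β + δ))))| ≤ C * Real.exp (-δ * X) := by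
  have hbd : 0 < β + δ := by linarith
  refine ⟨1 / δ + 1 / (β + δ), by positivity, fun X hX => ?_⟩
  set f : ℝ × ℝ → ℝ :=
    fun p => β * δ * Real.exp (-β * p.1 - δ * p.2) * min 0 (p.1 - min X p.2) with hf
  set μ : Measure (ℝ × ℝ) :=
    (volume.restrict (Set.Ioi (0:ℝ))).prod (volume.restrict (Set.Ioi (0:ℝ))) with hμ
  have hμeq : μ = volume.restrict ((Set.Ioi (0:ℝ)) ×ˢ (Set.Ioi (0:ℝ))) := by
    rw [hμ, Measure.prod_restrict, ← Measure.volume_eq_prod]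
  -- integrability
  have hfc : Continuous f := by fun_prop
  have hg : Integrable (fun p : ℝ × ℝ =>
      (β * δ * X) * (Real.exp (-β * p.1) * Real.exp (-δ * p.2))) μ := by
    refine Integrable.const_mul ?_ _
    exact Integrable.mul_prod
      ((exp_neg_integrableOn_Ioi 0 hβ))
      ((exp_neg_integrableOn_Ioi 0 hδ))
  have hmem : ∀ᵐ p ∂μ, p ∈ (Set.Ioi (0:ℝ)) ×ˢ (Set.Ioi (0:ℝ)) := by
    rw [hμeq]
    exact ae_restrict_mem (measurableSet_Ioi.prod measurableSet_Ioi)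
  have hfint : Integrable f μ := by
    refine Integrable.mono hg hfc.aestronglyMeasurable ?_
    filter_upwards [hmem] with p hp
    obtain ⟨hp1, hp2⟩ := hp
    have hp1' : (0:ℝ) < p.1 := hp1
    have h1 : |min 0 (p.1 - min X p.2)| ≤ X := by
      rw [abs_le]
      refine ⟨le_min (by linarith [min_le_left X p.2]) ?_, le_trans (min_le_left _ _) hX⟩
      have := min_le_left X p.2
      linarith
    have hE : (0:ℝ) < Real.exp (-β * p.1 - δ * p.2) := Real.exp_pos _
    rw [Real.norm_eq_abs, Real.norm_eq_abs,
      abs_of_nonneg (by positivity : (0:ℝ) ≤ β * δ * X * (Real.exp (-β * p.1) * Real.exp (-δ * p.2)))]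
    have hfp : |f p| = β * δ * Real.exp (-β * p.1 - δ * p.2) * |min 0 (p.1 - min X p.2)| := by
      rw [hf, abs_mul, abs_of_nonneg (by positivity : (0:ℝ) ≤ β * δ * Real.exp (-β * p.1 - δ * p.2))]
    rw [hfp]
    calc β * δ * Real.exp (-β * p.1 - δ * p.2) * |min 0 (p.1 - min X p.2)|
        ≤ β * δ * Real.exp (-β * p.1 - δ * p.2) * X :=
          mul_le_mul_of_nonneg_left h1 (by positivity)
      _ = β * δ * X * (Real.exp (-β * p.1) * Real.exp (-δ * p.2)) := by
          rw [show -β * p.1 - δ * p.2 = -β * p.1 + -δ * p.2 by ring, Real.exp_add]; ring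
  -- Fubini
  have hIoi : ∀ y : ℝ, 0 < y →
      (∫ x in Set.Ioi (0:ℝ), f (x, y))
        = δ * Real.exp (-δ * y) * ((1 - Real.exp (-β * min X y)) / β - min X y) := by
    intro y hy
    have hmXy : 0 ≤ min X y := le_min hX hy.le
    have hrw : ∀ x : ℝ, f (x, y)
        = (δ * Real.exp (-δ * y)) * (β * Real.exp (-β * x) * min 0 (x - min X y)) := by
      intro x
      simp only [hf]
      rw [show -β * x - δ * y = -β * x + -δ * y by ring, Real.exp_add]
      ring
    simp_rw [hrw]
    rw [MeasureTheory.integral_const_mul, inner_int β (min X y) hβ hmXy]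
  have key : (∫ p in (Set.Ioi (0:ℝ)) ×ˢ (Set.Ioi (0:ℝ)), f p)
      = -(β / (δ * (β + δ))) + Real.exp (-δ * X) / δ
        - Real.exp (-(β + δ) * X) / (β + δ) := by
    rw [← hμeq, hμ, integral_prod_symm f (by rwa [← hμ])]
    rw [← outer_int β δ X hβ hδ hX]
    refine setIntegral_congr_fun measurableSet_Ioi (fun y hy => ?_)
    exact hIoi y hy
  rw [key]
  have heq : -(β / (δ * (β + δ))) + Real.exp (-δ * X) / δ - Real.exp (-(β + δ) * X) / (β + δ)
      - -(β / (δ * (β + δ)))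
      = Real.exp (-δ * X) / δ - Real.exp (-(β + δ) * X) / (β + δ) := by ring
  rw [heq]
  have hle : Real.exp (-(β + δ) * X) ≤ Real.exp (-δ * X) :=
    Real.exp_le_exp.mpr (by nlinarith)
  calc |Real.exp (-δ * X) / δ - Real.exp (-(β + δ) * X) / (β + δ)|
      ≤ |Real.exp (-δ * X) / δ| + |Real.exp (-(β + δ) * X) / (β + δ)| := abs_sub _ _
    _ = Real.exp (-δ * X) / δ + Real.exp (-(β + δ) * X) / (β + δ) := by
        rw [abs_of_nonneg (by positivity), abs_of_nonneg (by positivity)]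
    _ ≤ Real.exp (-δ * X) / δ + Real.exp (-δ * X) / (β + δ) := by
        gcongr
    _ = (1 / δ + 1 / (β + δ)) * Real.exp (-δ * X) := by ring
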